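/- Let p₁, ..., p_k be distinct odd primes each congruent to ±1 modulo 8 with p₁⋯p_k ≡ 1 (mod 8), and let A be the k×k F₂-matrix with off-diagonal entries a_ij = [p_j/p_i] (additive Legendre symbol) and diagonal a_ii = Σ_{l≠i} a_il. Let D be the diagonal F₂-matrix with entries [(-1)/p_i]. Then for any x ∈ F₂ᵏ, Ax = 0 if and only if xᵀ(A + D) = 0; in particular rank A = rank(A + D). -/

import Mathlib

/-- The additive Legendre symbol `[q/p] ∈ F₂`: `1` if `q` is a quadratic nonresidue
modulo `p` and `0` if it is a residue. -/
noncomputable def addLeg (q p : ℕ) : ZMod 2 :=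
  open scoped Classical in
  if IsSquare ((q : ZMod p)) then 0 else 1

/-- The additive symbol `[-1/p]`. -/
noncomputable def addLegNegOne (p : ℕ) : ZMod 2 :=
  open scoped Classical in
  if IsSquare ((-1 : ZMod p)) then 0 else 1

-- reciprocity
lemma recip (q r : ℕ) (hq : q.Prime) (hr : r.Prime) (hq2 : q % 2 = 1) (hr2 : r % 2 = 1)
    (hne : q ≠ r) :
    addLeg r q + addLeg q r = addLegNegOne q * addLegNegOne r := by
  haveI : Fact q.Prime := ⟨hq⟩
  haveI : Fact r.Prime := ⟨hr⟩
  have hq4 : q % 4 = 1 ∨ q % 4 = 3 := by omega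
  have hr4 : r % 4 = 1 ∨ r % 4 = 3 := by omega
  unfold addLeg addLegNegOne
  rcases hq4 with hq4 | hq4
  · have h1 : IsSquare ((r : ZMod q)) ↔ IsSquare ((q : ZMod r)) :=
      ZMod.exists_sq_eq_prime_iff_of_mod_four_eq_one hq4 (by omega)
    have h2 : IsSquare ((-1 : ZMod q)) := ZMod.exists_sq_eq_neg_one_iff.2 (by omega)
    by_cases hs : IsSquare ((q : ZMod r)) <;>
      simp [h1, h2, hs] <;> decide
  · rcases hr4 with hr4 | hr4
    · have h1 : IsSquare ((q : ZMod r)) ↔ IsSquare ((r : ZMod q)) :=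
        ZMod.exists_sq_eq_prime_iff_of_mod_four_eq_one hr4 (by omega)
      have h2 : IsSquare ((-1 : ZMod r)) := ZMod.exists_sq_eq_neg_one_iff.2 (by omega)
      by_cases hs : IsSquare ((r : ZMod q)) <;> simp [h1, h2, hs] <;> decide
    · have h1 : IsSquare ((r : ZMod q)) ↔ ¬ IsSquare ((q : ZMod r)) :=
        ZMod.exists_sq_eq_prime_iff_of_mod_four_eq_three hq4 hr4 hne
      have h2 : ¬ IsSquare ((-1 : ZMod q)) := by
        rw [ZMod.exists_sq_eq_neg_one_iff]; omega
      have h3 : ¬ IsSquare ((-1 : ZMod r)) := by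
        rw [ZMod.exists_sq_eq_neg_one_iff]; omega
      by_cases hs : IsSquare ((q : ZMod r)) <;> simp [h1, h2, h3, hs] <;> decide

lemma epsval (q : ℕ) (hq : q.Prime) (h8 : q % 8 = 1 ∨ q % 8 = 7) :
    addLegNegOne q = if q % 8 = 1 then 0 else 1 := by
  haveI : Fact q.Prime := ⟨hq⟩
  unfold addLegNegOne
  rcases h8 with h | h
  · have h2 : IsSquare ((-1 : ZMod q)) := ZMod.exists_sq_eq_neg_one_iff.2 (by omega)
    simp [h2, h]
  · have h2 : ¬ IsSquare ((-1 : ZMod q)) := by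
      rw [ZMod.exists_sq_eq_neg_one_iff]; omega
    simp [h2, h]

theorem stmt15 (k : ℕ) (p : Fin k → ℕ) (hp : ∀ i, (p i).Prime)
    (hinj : Function.Injective p) (hodd : ∀ i, p i % 2 = 1)
    (h8 : ∀ i, p i % 8 = 1 ∨ p i % 8 = 7) (hn : (∏ i, p i) % 8 = 1)
    (A : Matrix (Fin k) (Fin k) (ZMod 2))
    (hAoff : ∀ i j, i ≠ j → A i j = addLeg (p j) (p i))
    (hAdiag : ∀ i, A i i = ∑ l ∈ Finset.univ.erase i, A i l)
    (D : Matrix (Fin k) (Fin k) (ZMod 2))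
    (hD : D = Matrix.diagonal (fun i => addLegNegOne (p i))) :
    (∀ x : Fin k → ZMod 2, A.mulVec x = 0 ↔ Matrix.vecMul x (A + D) = 0) ∧
      A.rank = (A + D).rank := by
  classical
  -- helpers in ZMod 2
  have hmul : ∀ a : ZMod 2, a * a = a := by decide
  have hflip : ∀ a b c : ZMod 2, a + b = c → a = b + c := by decide
  have haz : ∀ a b : ZMod 2, a + b = 0 → b = a := by decide
  have haz2 : ∀ a b : ZMod 2, a + b = 0 → a = b := by decide
  have habs : ∀ a b : ZMod 2, a + (a + b) = b := by decide
  -- sum of the eps is zero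
  have hS : ∑ i, addLegNegOne (p i) = 0 := by
    set c : Fin k → ℕ := fun i => if p i % 8 = 1 then 0 else 1 with hc
    have hc8 : ∀ i, ((p i : ZMod 8)) = (-1) ^ c i := by
      intro i
      have h0 : ((p i : ℕ) : ZMod 8) = ((p i % 8 : ℕ) : ZMod 8) := (ZMod.natCast_mod _ _).symm
      rcases h8 i with h | h <;> rw [h0, h] <;> simp [hc, h] <;> decide
    have hprod : ((-1 : ZMod 8)) ^ (∑ i, c i) = 1 := by
      rw [← Finset.prod_pow_eq_pow_sum]
      calc ∏ i, ((-1 : ZMod 8)) ^ c i = ∏ i, ((p i : ZMod 8)) :=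
            Finset.prod_congr rfl fun i _ => (hc8 i).symm
        _ = ((∏ i, p i : ℕ) : ZMod 8) := by rw [Nat.cast_prod]
        _ = (((∏ i, p i) % 8 : ℕ) : ZMod 8) := (ZMod.natCast_mod _ _).symm
        _ = 1 := by rw [hn]; norm_num
    have heven : Even (∑ i, c i) := by
      by_contra hodd'
      have h1 : ((-1 : ZMod 8)) ^ (∑ i, c i) = -1 :=
        Odd.neg_one_pow (Nat.not_even_iff_odd.mp hodd')
      rw [h1] at hprod
      exact absurd hprod (by decide)
    have h2 : ∑ i, addLegNegOne (p i) = ((∑ i, c i : ℕ) : ZMod 2) := by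
      rw [Nat.cast_sum]
      refine Finset.sum_congr rfl fun i _ => ?_
      rw [epsval (p i) (hp i) (h8 i)]
      rcases h8 i with h | h <;> simp [hc, h]
    rw [h2, ZMod.natCast_eq_zero_iff]
    exact heven.two_dvd
  -- quasi-symmetry of A
  have hrel : ∀ i j, i ≠ j →
      A i j = A j i + addLegNegOne (p i) * addLegNegOne (p j) := by
    intro i j hij
    have h := recip (p i) (p j) (hp i) (hp j) (hodd i) (hodd j)
      (fun h => hij (hinj h))
    rw [← hAoff i j hij, ← hAoff j i hij.symm] at h
    exact hflip _ _ _ h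
  -- column sums of A
  have hcol : ∀ j, ∑ i, A i j = addLegNegOne (p j) := by
    intro j
    have e0 : ∑ i, A i j = A j j + ∑ i ∈ Finset.univ.erase j, A i j :=
      (Finset.add_sum_erase _ _ (Finset.mem_univ j)).symm
    have e2 : ∑ i ∈ Finset.univ.erase j, addLegNegOne (p i) = addLegNegOne (p j) := by
      have h := Finset.add_sum_erase Finset.univ (fun i => addLegNegOne (p i))
        (Finset.mem_univ j)
      rw [hS] at h
      exact haz _ _ h
    have e1 : ∑ i ∈ Finset.univ.erase j, A i j
        = A j j + addLegNegOne (p j) := by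
      calc ∑ i ∈ Finset.univ.erase j, A i j
          = ∑ i ∈ Finset.univ.erase j,
              (A j i + addLegNegOne (p i) * addLegNegOne (p j)) :=
            Finset.sum_congr rfl fun i hi => hrel i j (Finset.ne_of_mem_erase hi)
        _ = (∑ i ∈ Finset.univ.erase j, A j i)
              + (∑ i ∈ Finset.univ.erase j, addLegNegOne (p i)) * addLegNegOne (p j) := by
            rw [Finset.sum_add_distrib, Finset.sum_mul]
        _ = A j j + addLegNegOne (p j) := by
            rw [e2, hmul, ← hAdiag j]
    rw [e0, e1, habs]
  -- the key pointwise identity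
  have hsum : ∀ x : Fin k → ZMod 2,
      ∑ i, A.mulVec x i = ∑ i, addLegNegOne (p i) * x i := by
    intro x
    simp only [Matrix.mulVec, dotProduct]
    rw [Finset.sum_comm]
    exact Finset.sum_congr rfl fun j _ => by rw [← Finset.sum_mul, hcol j]
  have hZ1 : ∀ a e t : ZMod 2, t * (a + e) = a * t + (e * t) * e := by decide
  have hZ2 : ∀ a b c t : ZMod 2, t * (a + b * c) = a * t + (b * t) * c := by decide
  have hkey : ∀ (x : Fin k → ZMod 2) (j : Fin k), Matrix.vecMul x (A + D) j
      = A.mulVec x j + (∑ i, addLegNegOne (p i) * x i) * addLegNegOne (p j) := by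
    intro x j
    have e1 : ∀ i, x i * (A + D) i j
        = A j i * x i + (addLegNegOne (p i) * x i) * addLegNegOne (p j) := by
      intro i
      by_cases h : i = j
      · subst h
        simp only [Matrix.add_apply, hD, Matrix.diagonal_apply_eq]
        exact hZ1 _ _ _
      · simp only [Matrix.add_apply, hD, Matrix.diagonal_apply_ne _ h, add_zero]
        rw [hrel i j h]
        exact hZ2 _ _ _ _
    simp only [Matrix.vecMul, Matrix.mulVec, dotProduct]
    rw [Finset.sum_congr rfl fun i _ => e1 i, Finset.sum_add_distrib, Finset.sum_mul]
  -- the iff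
  have hiff : ∀ x : Fin k → ZMod 2,
      A.mulVec x = 0 ↔ Matrix.vecMul x (A + D) = 0 := by
    intro x
    constructor
    · intro h
      funext j
      have hz : ∑ i, addLegNegOne (p i) * x i = 0 := by
        rw [← hsum x, h]; simp
      rw [hkey x j, hz, zero_mul]
      simp [h]
    · intro h
      have h2 : ∀ j, A.mulVec x j
          = (∑ i, addLegNegOne (p i) * x i) * addLegNegOne (p j) := by
        intro j
        exact haz2 _ _ (by rw [← hkey x j, h]; simp)
      have h3 : (∑ i, addLegNegOne (p i) * x i) = 0 := by
        have h4 : ∑ j, A.mulVec x j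
            = (∑ i, addLegNegOne (p i) * x i) * ∑ j, addLegNegOne (p j) := by
          rw [Finset.mul_sum]
          exact Finset.sum_congr rfl fun j _ => h2 j
        rw [hS, mul_zero, hsum x] at h4
        exact h4
      funext j
      rw [Pi.zero_apply, h2 j, h3, zero_mul]
  refine ⟨hiff, ?_⟩
  -- rank equality
  haveI : Fact (Nat.Prime 2) := ⟨Nat.prime_two⟩
  have hker : LinearMap.ker A.mulVecLin = LinearMap.ker (Matrix.mulVecLin ((Matrix.transpose (A + D)))) := by
    ext x
    simp only [LinearMap.mem_ker, Matrix.mulVecLin_apply]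
    rw [Matrix.mulVec_transpose]
    exact hiff x
  have r1 := LinearMap.finrank_range_add_finrank_ker A.mulVecLin
  have r2 := LinearMap.finrank_range_add_finrank_ker (Matrix.mulVecLin ((Matrix.transpose (A + D))))
  rw [← Matrix.rank_transpose (A + D)]
  rw [Matrix.rank, Matrix.rank]
  rw [hker] at r1
  omega
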